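/- (Covering argument for the singular set.) Let f : ℝ³×ℝ → [0,∞) be Lebesgue integrable and let ε > 0. Define Σ := { z ∈ ℝ³×ℝ : limsup_{r→0⁺} r⁻¹ ∫_{P_r(z)} f ≥ ε }. Then Σ has Lebesgue measure zero, and for every κ > 0 there exist countably many points z_i ∈ ℝ³×ℝ and radii r_i ∈ (0, κ) such that Σ ⊆ ⋃_i P_{5 r_i}(z_i) and ∑_i r_i ≤ κ. (This expresses that the one-dimensional parabolic Hausdorff measure of Σ vanishes.) -/

import Mathlib

noncomputable section
open MeasureTheory Metric Set Filter
open scoped ENNReal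

/-- Euclidean 3-space. -/
abbrev E3 : Type := EuclideanSpace ℝ (Fin 3)

/-- The backward parabolic cylinder `P_r(x,t) = B_r(x) × (t − r², t)`. -/
def Pcyl (r : ℝ) (z : E3 × ℝ) : Set (E3 × ℝ) :=
  ball z.1 r ×ˢ Ioo (z.2 - r ^ 2) z.2

/-- The "singular" set of points where the renormalized parabolic averages of `f` do not
tend to values below `ε`: `Σ = { z : limsup_{r→0⁺} r⁻¹ ∫_{P_r(z)} f ≥ ε }`. -/
def singSet (f : E3 × ℝ → ℝ) (ε : ℝ) : Set (E3 × ℝ) :=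
  {z | ENNReal.ofReal ε ≤
    limsup (fun r : ℝ => (ENNReal.ofReal r)⁻¹ * ∫⁻ p in Pcyl r z, ENNReal.ofReal (f p))
      (nhdsWithin 0 (Ioi 0))}

lemma pcyl_isOpen (r : ℝ) (z : E3 × ℝ) : IsOpen (Pcyl r z) :=
  isOpen_ball.prod isOpen_Ioo

lemma pcyl_nonempty {r : ℝ} (hr : 0 < r) (z : E3 × ℝ) : (Pcyl r z).Nonempty :=
  (nonempty_ball.2 hr).prod (nonempty_Ioo.2 (by nlinarith))

lemma pcyl_mono {r r' : ℝ} (h0 : 0 ≤ r) (h : r ≤ r') (z : E3 × ℝ) :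
    Pcyl r z ⊆ Pcyl r' z :=
  prod_mono (ball_subset_ball h) (Ioo_subset_Ioo (by nlinarith) le_rfl)

lemma pcyl_subset_open {U : Set (E3 × ℝ)} (hU : IsOpen U) {z : E3 × ℝ} (hz : z ∈ U) :
    ∃ η > 0, ∀ r : ℝ, 0 < r → r < η → Pcyl r z ⊆ U := by
  obtain ⟨η, hη, hball⟩ := Metric.isOpen_iff.1 hU z hz
  refine ⟨min η 1, lt_min hη one_pos, fun r hr hrη => ?_⟩
  have hrη' : r < η := lt_of_lt_of_le hrη (min_le_left _ _)
  have hr1 : r < 1 := lt_of_lt_of_le hrη (min_le_right _ _)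
  intro p hp
  obtain ⟨hp1, hp2⟩ := hp
  apply hball
  rw [mem_ball, Prod.dist_eq]
  refine max_lt (lt_trans hp1 hrη') ?_
  rw [Real.dist_eq, abs_lt]
  constructor
  · simp only [mem_Ioo] at hp2; nlinarith [hp2.1, hp2.2]
  · simp only [mem_Ioo] at hp2; nlinarith [hp2.1, hp2.2]

lemma mem_enlarged {r r' : ℝ} {z z' : E3 × ℝ} (hr : 0 < r) (hr' : 0 < r')
    (hle : r ≤ 2 * r') (hne : (Pcyl r z ∩ Pcyl r' z').Nonempty) :
    z ∈ Pcyl (5 * r') (z'.1, z'.2 + 4 * r' ^ 2) := by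
  obtain ⟨⟨y, s⟩, ⟨hy1, hy2⟩, ⟨hy1', hy2'⟩⟩ := hne
  simp only [Pcyl, mem_ball, mem_Ioo] at hy1 hy2 hy1' hy2'
  refine ⟨?_, ?_, ?_⟩
  · show dist z.1 z'.1 < 5 * r'
    have htri := dist_triangle z.1 y z'.1
    have h1 : dist z.1 y < r := by rw [dist_comm]; exact hy1
    nlinarith [htri, hy1']
  · show z'.2 + 4 * r' ^ 2 - (5 * r') ^ 2 < z.2
    nlinarith [hy2.1, hy2.2, hy2'.1, hy2'.2]
  · show z.2 < z'.2 + 4 * r' ^ 2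
    nlinarith [hy2.1, hy2.2, hy2'.1, hy2'.2]

lemma exists_small_r {f : E3 × ℝ → ℝ} {ε : ℝ} (hε : 0 < ε) {z : E3 × ℝ}
    (hz : z ∈ singSet f ε) {δ : ℝ} (hδ : 0 < δ) :
    ∃ r : ℝ, 0 < r ∧ r < δ ∧
      ENNReal.ofReal (ε / 2) * ENNReal.ofReal r ≤
        ∫⁻ p in Pcyl r z, ENNReal.ofReal (f p) := by
  have hfreq : ∃ᶠ r in nhdsWithin (0:ℝ) (Ioi 0),
      ENNReal.ofReal (ε / 2) ≤
        (ENNReal.ofReal r)⁻¹ * ∫⁻ p in Pcyl r z, ENNReal.ofReal (f p) := by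
    by_contra h
    rw [not_frequently] at h
    have hls : limsup (fun r : ℝ =>
        (ENNReal.ofReal r)⁻¹ * ∫⁻ p in Pcyl r z, ENNReal.ofReal (f p))
        (nhdsWithin 0 (Ioi 0)) ≤ ENNReal.ofReal (ε / 2) :=
      limsup_le_of_le (by isBoundedDefault) (h.mono fun r hr => le_of_not_ge hr)
    have : ENNReal.ofReal ε ≤ ENNReal.ofReal (ε / 2) := le_trans hz hls
    have hc : ENNReal.ofReal (ε / 2) < ENNReal.ofReal ε :=
      ENNReal.ofReal_lt_ofReal_iff hε |>.2 (by linarith)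
    exact absurd this (not_le.2 hc)
  have hIoo : Ioo (0:ℝ) δ ∈ nhdsWithin (0:ℝ) (Ioi 0) :=
    Ioo_mem_nhdsGT_of_mem ⟨le_refl 0, hδ⟩
  obtain ⟨r, hr1, hr2⟩ := (hfreq.and_eventually (eventually_of_mem hIoo fun x hx => hx)).exists
  refine ⟨r, hr2.1, hr2.2, ?_⟩
  have h0 : ENNReal.ofReal r ≠ 0 := by
    simp [ENNReal.ofReal_eq_zero, not_le, hr2.1]
  have htop : ENNReal.ofReal r ≠ ⊤ := ENNReal.ofReal_ne_top
  calc ENNReal.ofReal (ε / 2) * ENNReal.ofReal r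
      ≤ ((ENNReal.ofReal r)⁻¹ * ∫⁻ p in Pcyl r z, ENNReal.ofReal (f p)) * ENNReal.ofReal r :=
        mul_le_mul_left hr1 _
    _ = ∫⁻ p in Pcyl r z, ENNReal.ofReal (f p) := by
        rw [mul_comm, ← mul_assoc, ENNReal.mul_inv_cancel h0 htop, one_mul]

lemma key {f : E3 × ℝ → ℝ} {ε : ℝ} (hε : 0 < ε) {κ : ℝ} (hκ : 0 < κ)
    {U : Set (E3 × ℝ)} (hUo : IsOpen U) (hsU : singSet f ε ⊆ U) :
    ∃ (z : ℕ → E3 × ℝ) (r : ℕ → ℝ),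
      (∀ i, r i ∈ Ioo (0 : ℝ) κ) ∧
      singSet f ε ⊆ ⋃ i, Pcyl (5 * r i) (z i) ∧
      (∑' i, ENNReal.ofReal (r i)) ≤
        ENNReal.ofReal (κ / 2) +
          (ENNReal.ofReal (ε / 2))⁻¹ * ∫⁻ p in U, ENNReal.ofReal (f p) := by
  -- choose radii at every singular point
  have hch : ∀ z ∈ singSet f ε, ∃ ρ : ℝ, 0 < ρ ∧ ρ < κ / 4 ∧
      ENNReal.ofReal (ε / 2) * ENNReal.ofReal ρ ≤
        (∫⁻ p in Pcyl ρ z, ENNReal.ofReal (f p)) ∧ Pcyl ρ z ⊆ U := by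
    intro z hz
    obtain ⟨η, hη, hsub⟩ := pcyl_subset_open hUo (hsU hz)
    obtain ⟨ρ, hρ0, hρδ, hρI⟩ := exists_small_r hε hz (δ := min η (κ / 4))
      (lt_min hη (by linarith))
    exact ⟨ρ, hρ0, lt_of_lt_of_le hρδ (min_le_right _ _), hρI,
      hsub ρ hρ0 (lt_of_lt_of_le hρδ (min_le_left _ _))⟩
  choose! ρ h1 h2 h3 h4 using hch
  -- Vitali covering
  obtain ⟨u, hut, hdisj, hcov⟩ := Vitali.exists_disjoint_subfamily_covering_enlargement
    (fun z => Pcyl (ρ z) z) (singSet f ε) ρ 2 one_lt_two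
    (fun z hz => (h1 z hz).le) κ (fun z hz => (h2 z hz).le.trans (by linarith))
    (fun z hz => pcyl_nonempty (h1 z hz) z)
  have hu_cnt : u.Countable :=
    hdisj.countable_of_isOpen (fun z _ => pcyl_isOpen _ _)
      (fun z hz => pcyl_nonempty (h1 z (hut hz)) z)
  haveI : Countable ↥u := hu_cnt.to_subtype
  haveI : Encodable ↥u := hu_cnt.toEncodable
  set dec : ℕ → Option ↥u := Encodable.decode₂ ↥u with hdec_def
  set pad : ℕ → ℝ := fun n => κ / 4 * (1 / 2) ^ n with hpad_def
  have hpad_pos : ∀ n, 0 < pad n := fun n => by positivity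
  have hpad_le : ∀ n, pad n ≤ κ / 4 := by
    intro n
    have : ((1:ℝ) / 2) ^ n ≤ 1 := pow_le_one₀ (by norm_num) (by norm_num)
    calc κ / 4 * (1 / 2) ^ n ≤ κ / 4 * 1 := by
          apply mul_le_mul_of_nonneg_left this (by linarith)
      _ = κ / 4 := by ring
  set g : ℕ → ℝ := fun n => (dec n).elim 0 (fun b => ρ b) with hg_def
  have hg_nonneg : ∀ n, 0 ≤ g n := by
    intro n
    simp only [hg_def]
    cases h : dec n with
    | none => simp
    | some b => simp [Option.elim]; exact (h1 b (hut b.2)).le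
  have hg_lt : ∀ n, g n < κ / 4 := by
    intro n
    simp only [hg_def]
    cases h : dec n with
    | none => simp; linarith
    | some b => simp [Option.elim]; exact h2 b (hut b.2)
  refine ⟨fun n => (dec n).elim ((0:E3), (0:ℝ))
      (fun b => ((b:E3×ℝ).1, (b:E3×ℝ).2 + 4 * (ρ b) ^ 2)),
    fun n => g n + pad n, ?_, ?_, ?_⟩
  · intro n
    have hp := hpad_pos n; have hl := hpad_le n
    have h0 := hg_nonneg n; have hl2 := hg_lt n
    constructor
    · show 0 < g n + pad n; linarith
    · show g n + pad n < κ; linarith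
  · -- covering
    intro z hz
    obtain ⟨b, hbu, hbne, hble⟩ := hcov z hz
    set B : ↥u := ⟨b, hbu⟩ with hB
    have hdecB : dec (Encodable.encode B) = some B := Encodable.decode₂_encode B
    rw [mem_iUnion]
    refine ⟨Encodable.encode B, ?_⟩
    have hmem : z ∈ Pcyl (5 * ρ b) (b.1, b.2 + 4 * (ρ b) ^ 2) :=
      mem_enlarged (h1 z hz) (h1 b (hut hbu)) hble hbne
    have hsub : Pcyl (5 * ρ b) (b.1, b.2 + 4 * (ρ b) ^ 2) ⊆
        Pcyl (5 * (g (Encodable.encode B) + pad (Encodable.encode B)))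
          (b.1, b.2 + 4 * (ρ b) ^ 2) := by
      apply pcyl_mono (by nlinarith [h1 b (hut hbu)])
      have : g (Encodable.encode B) = ρ b := by simp [hg_def, hdecB, Option.elim]; rfl
      nlinarith [hpad_pos (Encodable.encode B), this.ge, this.le]
    have : (dec (Encodable.encode B)).elim ((0:E3), (0:ℝ))
        (fun b => ((b:E3×ℝ).1, (b:E3×ℝ).2 + 4 * (ρ b) ^ 2)) =
        (b.1, b.2 + 4 * (ρ b) ^ 2) := by simp [hdecB, Option.elim]; exact ⟨rfl, rfl⟩
    beta_reduce
    rw [this]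
    exact hsub hmem
  · -- sum bound
    have hsplit : (∑' n, ENNReal.ofReal (g n + pad n)) =
        (∑' n, ENNReal.ofReal (g n)) + ∑' n, ENNReal.ofReal (pad n) := by
      rw [← ENNReal.tsum_add]
      congr 1; ext n
      exact ENNReal.ofReal_add (hg_nonneg n) (hpad_pos n).le
    rw [hsplit]
    have hpadsum : (∑' n, ENNReal.ofReal (pad n)) = ENNReal.ofReal (κ / 2) := by
      rw [← ENNReal.ofReal_tsum_of_nonneg (fun n => (hpad_pos n).le)
        ((summable_geometric_of_lt_one (by norm_num) (by norm_num)).mul_left _)]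
      congr 1
      rw [tsum_mul_left, tsum_geometric_of_lt_one (by norm_num) (by norm_num)]
      norm_num
      ring
    have hgsum : (∑' n, ENNReal.ofReal (g n)) = ∑' b : ↥u, ENNReal.ofReal (ρ b) := by
      refine (Function.Injective.tsum_eq (f := fun n => ENNReal.ofReal (g n))
        (g := (Encodable.encode : ↥u → ℕ)) Encodable.encode_injective ?_).symm.trans ?_
      · intro n hn
        simp only [Function.mem_support] at hn
        rcases h : dec n with _ | b
        · exfalso; apply hn; simp [hg_def, h, Option.elim]
        · exact ⟨b, (Encodable.mem_decode₂.1 (by rw [← hdec_def, h]; rfl))⟩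
      · congr 1; ext b
        simp [hg_def, hdec_def, Encodable.decode₂_encode, Option.elim]
    rw [hgsum, hpadsum]
    rw [add_comm]
    gcongr
    -- ∑' b : u, ofReal (ρ b) ≤ (ofReal (ε/2))⁻¹ * ∫_U
    have ha0 : ENNReal.ofReal (ε / 2) ≠ 0 := by
      simp [ENNReal.ofReal_eq_zero]; linarith
    have hatop : ENNReal.ofReal (ε / 2) ≠ ⊤ := ENNReal.ofReal_ne_top
    have hmain : ENNReal.ofReal (ε / 2) * (∑' b : ↥u, ENNReal.ofReal (ρ b)) ≤
        ∫⁻ p in U, ENNReal.ofReal (f p) := by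
      rw [← ENNReal.tsum_mul_left]
      calc (∑' b : ↥u, ENNReal.ofReal (ε / 2) * ENNReal.ofReal (ρ b))
          ≤ ∑' b : ↥u, ∫⁻ p in Pcyl (ρ b) (b : E3 × ℝ), ENNReal.ofReal (f p) :=
            ENNReal.tsum_le_tsum (fun b => h3 b (hut b.2))
        _ = ∫⁻ p in ⋃ b : ↥u, Pcyl (ρ b) (b : E3 × ℝ), ENNReal.ofReal (f p) :=
            (lintegral_iUnion (fun b : ↥u => (pcyl_isOpen _ _).measurableSet)
              (fun i j hij => hdisj i.2 j.2 (fun h => hij (Subtype.ext h))) _).symm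
        _ ≤ ∫⁻ p in U, ENNReal.ofReal (f p) := by
            apply lintegral_mono_set
            exact iUnion_subset fun b => h4 b (hut b.2)
    calc (∑' b : ↥u, ENNReal.ofReal (ρ b))
        = (ENNReal.ofReal (ε / 2))⁻¹ *
            (ENNReal.ofReal (ε / 2) * ∑' b : ↥u, ENNReal.ofReal (ρ b)) := by
          rw [← mul_assoc, ENNReal.inv_mul_cancel ha0 hatop, one_mul]
      _ ≤ (ENNReal.ofReal (ε / 2))⁻¹ * ∫⁻ p in U, ENNReal.ofReal (f p) :=
          mul_le_mul_right hmain _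

/-- Covering argument for the singular set. If `f ≥ 0` is Lebesgue
integrable on `ℝ³×ℝ` and `ε > 0`, then `Σ` has Lebesgue measure zero, and for every
`κ > 0` there are countably many `z_i` and radii `r_i ∈ (0, κ)` with
`Σ ⊆ ⋃ i, P_{5 r_i}(z_i)` and `∑ r_i ≤ κ`; i.e. the one-dimensional parabolic Hausdorff
measure of `Σ` vanishes. -/
theorem statement_16 (f : E3 × ℝ → ℝ) (hf : Integrable f) (hnn : ∀ z, 0 ≤ f z)
    (ε : ℝ) (hε : 0 < ε) :
    volume (singSet f ε) = 0 ∧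
      ∀ κ : ℝ, 0 < κ →
        ∃ (z : ℕ → E3 × ℝ) (r : ℕ → ℝ),
          (∀ i, r i ∈ Ioo (0 : ℝ) κ) ∧
          singSet f ε ⊆ ⋃ i, Pcyl (5 * r i) (z i) ∧
          (∑' i, ENNReal.ofReal (r i)) ≤ ENNReal.ofReal κ := by

  have hL : (∫⁻ p, ENNReal.ofReal (f p)) ≠ ⊤ := hf.lintegral_lt_top.ne
  have ha0 : ENNReal.ofReal (ε / 2) ≠ 0 := by
    simp only [ne_eq, ENNReal.ofReal_eq_zero, not_le]; linarith
  have hatop : ENNReal.ofReal (ε / 2) ≠ ⊤ := ENNReal.ofReal_ne_top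
  set C := volume (ball (0:E3) 1) with hC
  have hCtop : C ≠ ⊤ := measure_ball_lt_top.ne
  have vol_pcyl : ∀ (R : ℝ), 0 ≤ R → ∀ w : E3 × ℝ, volume (Pcyl R w) =
      ENNReal.ofReal (R ^ 3) * C * ENNReal.ofReal (R ^ 2) := by
    intro R hR w
    rw [Pcyl, Measure.volume_eq_prod, Measure.prod_prod, Real.volume_Ioo,
      Measure.addHaar_ball (volume : Measure E3) w.1 hR, finrank_euclideanSpace_fin,
      show w.2 - (w.2 - R ^ 2) = R ^ 2 by ring]
  set M : ℝ≥0∞ := ENNReal.ofReal (1/2) +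
    (ENNReal.ofReal (ε/2))⁻¹ * ∫⁻ p, ENNReal.ofReal (f p) with hM
  set D : ℝ≥0∞ := ENNReal.ofReal (5^5) * C * M with hD
  have hMtop : M ≠ ⊤ :=
    ENNReal.add_ne_top.2 ⟨ENNReal.ofReal_ne_top,
      ENNReal.mul_ne_top (ENNReal.inv_ne_top.2 ha0) hL⟩
  have hDtop : D ≠ ⊤ :=
    ENNReal.mul_ne_top (ENNReal.mul_ne_top ENNReal.ofReal_ne_top hCtop) hMtop
  have claim : ∀ κ : ℝ, 0 < κ → κ ≤ 1 →
      volume (singSet f ε) ≤ ENNReal.ofReal κ * D := by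
    intro κ hκ hκ1
    obtain ⟨z, r, hr, hcov, hsum⟩ := key hε hκ isOpen_univ (subset_univ _)
    have hsum' : (∑' i, ENNReal.ofReal (r i)) ≤ M := by
      refine hsum.trans ?_
      rw [Measure.restrict_univ, hM]
      gcongr
    calc volume (singSet f ε) ≤ volume (⋃ i, Pcyl (5 * r i) (z i)) := measure_mono hcov
      _ ≤ ∑' i, volume (Pcyl (5 * r i) (z i)) := measure_iUnion_le _
      _ ≤ ∑' i, ENNReal.ofReal κ * ENNReal.ofReal (5^5) * C * ENNReal.ofReal (r i) := by
          refine ENNReal.tsum_le_tsum fun i => ?_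
          have hr1 : 0 < r i := (hr i).1
          have hr2 : r i < κ := (hr i).2
          have hrle1 : r i ≤ 1 := le_trans hr2.le hκ1
          have h3' : r i ^ 3 ≤ 1 := pow_le_one₀ hr1.le hrle1
          have h4 : r i ^ 4 ≤ r i := by nlinarith [h3', hr1]
          have e1 : r i ^ 5 ≤ κ * r i := by nlinarith [h4, hr1, hr2]
          rw [vol_pcyl (5 * r i) (by linarith) (z i)]
          calc ENNReal.ofReal ((5 * r i) ^ 3) * C * ENNReal.ofReal ((5 * r i) ^ 2)
              = ENNReal.ofReal ((5 * r i) ^ 3 * (5 * r i) ^ 2) * C := by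
                rw [mul_right_comm,
                  ← ENNReal.ofReal_mul (pow_nonneg (by linarith : (0:ℝ) ≤ 5 * r i) 3)]
            _ ≤ ENNReal.ofReal (κ * 5 ^ 5 * r i) * C :=
                mul_le_mul_left (ENNReal.ofReal_le_ofReal (by nlinarith [e1])) C
            _ = ENNReal.ofReal κ * ENNReal.ofReal (5 ^ 5) * C * ENNReal.ofReal (r i) := by
                rw [ENNReal.ofReal_mul (by positivity), ENNReal.ofReal_mul (by positivity)]
                ring
      _ = ENNReal.ofReal κ * ENNReal.ofReal (5 ^ 5) * C * ∑' i, ENNReal.ofReal (r i) := by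
          simp_rw [mul_assoc]
          rw [ENNReal.tsum_mul_left, ENNReal.tsum_mul_left, ENNReal.tsum_mul_left]
      _ ≤ ENNReal.ofReal κ * ENNReal.ofReal (5 ^ 5) * C * M := by gcongr
      _ = ENNReal.ofReal κ * D := by rw [hD]; ring
  have hp1 : volume (singSet f ε) = 0 := by
    have h1 : Tendsto (fun n : ℕ => (1:ℝ) / (n + 1)) atTop (nhds 0) :=
      tendsto_one_div_add_atTop_nhds_zero_nat
    have h2 := ENNReal.tendsto_ofReal h1
    rw [ENNReal.ofReal_zero] at h2
    have hten : Tendsto (fun n : ℕ => ENNReal.ofReal (1 / (n + 1)) * D) atTop (nhds 0) := by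
      simpa using ENNReal.Tendsto.mul_const h2 (Or.inr hDtop)
    refine le_antisymm (ge_of_tendsto' hten fun n => ?_) zero_le
    refine claim (1 / (n + 1)) (by positivity) ?_
    rw [div_le_one (by positivity)]
    linarith [Nat.cast_nonneg (α := ℝ) n]
  refine ⟨hp1, fun κ hκ => ?_⟩
  set μf := volume.withDensity (fun p => ENNReal.ofReal (f p)) with hμf
  haveI : IsFiniteMeasure μf := isFiniteMeasure_withDensity hL
  have hac : μf ≪ volume := withDensity_absolutelyContinuous _ _
  have hs0 : μf (singSet f ε) = 0 := hac hp1
  have hT0 : (0:ℝ≥0∞) < ENNReal.ofReal (ε/2) * ENNReal.ofReal (κ/2) :=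
    ENNReal.mul_pos ha0 (by simp only [ne_eq, ENNReal.ofReal_eq_zero, not_le]; linarith)
  obtain ⟨U, hsU, hUo, hUlt⟩ := Set.exists_isOpen_lt_of_lt (μ := μf) (singSet f ε) _
    (by rw [hs0]; exact hT0)
  have hIU : (∫⁻ p in U, ENNReal.ofReal (f p)) ≤
      ENNReal.ofReal (ε/2) * ENNReal.ofReal (κ/2) := by
    rw [← withDensity_apply _ hUo.measurableSet]
    exact hUlt.le
  obtain ⟨z, r, hr, hcov, hsum⟩ := key hε hκ hUo hsU
  refine ⟨z, r, hr, hcov, hsum.trans ?_⟩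
  calc ENNReal.ofReal (κ/2) +
        (ENNReal.ofReal (ε/2))⁻¹ * ∫⁻ p in U, ENNReal.ofReal (f p)
      ≤ ENNReal.ofReal (κ/2) +
        (ENNReal.ofReal (ε/2))⁻¹ * (ENNReal.ofReal (ε/2) * ENNReal.ofReal (κ/2)) := by gcongr
    _ = ENNReal.ofReal (κ/2) + ENNReal.ofReal (κ/2) := by
        rw [← mul_assoc, ENNReal.inv_mul_cancel ha0 hatop, one_mul]
    _ = ENNReal.ofReal κ := by
        rw [← ENNReal.ofReal_add (by linarith) (by linarith)]
        congr 1; ring
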